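/- For all k ≥ 1, all 0 ≤ j ≤ k, and all n ≥ 0, we have F_k^j(n) ≥ F_{k+1}^{j+1}(n). -/
import Mathlib

section Stmt17Aux

variable (F : ℕ → ℕ → ℕ)
variable (hF : ∀ k, 1 ≤ k → F k 0 = 0 ∧ ∀ n, 1 ≤ n → F k n = n - (F k)^[k] (n - 1))

include hF

lemma stmt17_le_self (K : ℕ) (hK : 1 ≤ K) : ∀ n, F K n ≤ n := by
  intro n
  rcases n with _ | m
  · exact le_of_eq ((hF K hK).1)
  · rw [(hF K hK).2 (m+1) (by omega)]
    exact Nat.sub_le _ _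

lemma stmt17_iter_le_self (K : ℕ) (hK : 1 ≤ K) : ∀ i n, (F K)^[i] n ≤ n := by
  intro i
  induction i with
  | zero => simp
  | succ i IHi =>
    intro n
    rw [Function.iterate_succ_apply']
    exact (stmt17_le_self F hF K hK _).trans (IHi n)

lemma stmt17_eqn (K : ℕ) (hK : 1 ≤ K) (n : ℕ) :
    F K (n+1) + (F K)^[K] n = n + 1 := by
  have h1 := (hF K hK).2 (n+1) (by omega)
  have h3 : (n+1) - 1 = n := by omega
  rw [h3] at h1
  have h2 : (F K)^[K] n ≤ n := stmt17_iter_le_self F hF K hK K n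
  omega

lemma stmt17_one_le (K : ℕ) (hK : 1 ≤ K) (n : ℕ) (hn : 1 ≤ n) : 1 ≤ F K n := by
  obtain ⟨m, rfl⟩ : ∃ m, n = m+1 := ⟨n-1, by omega⟩
  have e := stmt17_eqn F hF K hK m
  have h2 : (F K)^[K] m ≤ m := stmt17_iter_le_self F hF K hK K m
  omega

lemma stmt17_iter_one_le (K : ℕ) (hK : 1 ≤ K) : ∀ i n, 1 ≤ n → 1 ≤ (F K)^[i] n := by
  intro i
  induction i with
  | zero => intro n hn; simpa using hn
  | succ i IHi =>
    intro n hn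
    rw [Function.iterate_succ_apply']
    exact stmt17_one_le F hF K hK _ (IHi n hn)

lemma stmt17_F1 (K : ℕ) (hK : 1 ≤ K) : F K 1 = 1 := by
  have e := stmt17_eqn F hF K hK 0
  have h0 : (F K)^[K] 0 = 0 := Function.iterate_fixed ((hF K hK).1) K
  simp only [zero_add] at e
  omega

lemma stmt17_pair (K : ℕ) (hK : 1 ≤ K) :
    ∀ n i, (F K)^[i] n ≤ (F K)^[i] (n+1) ∧ (F K)^[i] (n+1) ≤ (F K)^[i] n + 1 := by
  intro n
  induction n using Nat.strong_induction_on with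
  | _ n IH =>
    have onestep : ∀ m, m ≤ n → F K m ≤ F K (m+1) ∧ F K (m+1) ≤ F K m + 1 := by
      intro m hm
      rcases m with _ | m'
      · have h0 : F K 0 = 0 := (hF K hK).1
        have e := stmt17_eqn F hF K hK 0
        have h1 : (F K)^[K] 0 = 0 := Function.iterate_fixed ((hF K hK).1) K
        constructor <;> omega
      · have e1 := stmt17_eqn F hF K hK m'
        have e2 := stmt17_eqn F hF K hK (m'+1)
        obtain ⟨u1, u2⟩ := IH m' (by omega) K
        constructor <;> omega
    intro i
    induction i with
    | zero =>
      simp only [Function.iterate_zero, id_eq]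
      exact ⟨Nat.le_succ n, le_rfl⟩
    | succ i IHi =>
      obtain ⟨h1, h2⟩ := IHi
      rw [Function.iterate_succ_apply', Function.iterate_succ_apply']
      rcases (show (F K)^[i] (n+1) = (F K)^[i] n ∨ (F K)^[i] (n+1) = (F K)^[i] n + 1 by omega) with h | h
      · rw [h]
        exact ⟨le_rfl, Nat.le_succ _⟩
      · rw [h]
        exact onestep _ (stmt17_iter_le_self F hF K hK i n)

lemma stmt17_mono (K : ℕ) (hK : 1 ≤ K) (i : ℕ) :
    ∀ m n, m ≤ n → (F K)^[i] m ≤ (F K)^[i] n := by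
  intro m n h
  induction n, h using Nat.le_induction with
  | base => exact le_rfl
  | succ n hmn IHn => exact IHn.trans (stmt17_pair F hF K hK n i).1

lemma stmt17_mono1 (K : ℕ) (hK : 1 ≤ K) (m n : ℕ) (h : m ≤ n) : F K m ≤ F K n := by
  have := stmt17_mono F hF K hK 1 m n h
  simpa using this

lemma stmt17_lip1 (K : ℕ) (hK : 1 ≤ K) (n : ℕ) : F K (n+1) ≤ F K n + 1 := by
  have := (stmt17_pair F hF K hK n 1).2
  simpa using this

lemma stmt17_le_pred (K : ℕ) (hK : 1 ≤ K) (n : ℕ) (hn : 2 ≤ n) : F K n + 1 ≤ n := by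
  obtain ⟨p, rfl⟩ : ∃ p, n = p+1 := ⟨n-1, by omega⟩
  have e := stmt17_eqn F hF K hK p
  have h1 : 1 ≤ (F K)^[K] p := stmt17_iter_one_le F hF K hK K p (by omega)
  omega

lemma stmt17_iter_le_one (K : ℕ) (hK : 1 ≤ K) :
    ∀ i n, n ≤ i + 1 → (F K)^[i] n ≤ 1 := by
  intro i
  induction i with
  | zero => intro n hn; simpa using hn
  | succ i IHi =>
    intro n hn
    rw [Function.iterate_succ_apply]
    by_cases h1 : n ≤ 1
    · have h2 : F K n ≤ 1 := (stmt17_le_self F hF K hK n).trans h1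
      exact (stmt17_iter_le_self F hF K hK i (F K n)).trans h2
    · have h2 : F K n + 1 ≤ n := stmt17_le_pred F hF K hK n (by omega)
      exact IHi (F K n) (by omega)

lemma stmt17_CD (K : ℕ) (hK : 1 ≤ K) :
    ∀ v, (F K (v + (F K)^[K-1] v) ≤ v) ∧
      (1 ≤ v → v ≤ F K (v + (F K)^[K-1] (v-1))) := by
  have hiter : ∀ x, (F K)^[K] x = (F K)^[K-1] (F K x) := by
    intro x
    have h := Function.iterate_succ_apply (F K) (K-1) x
    have h2 : K - 1 + 1 = K := by omega
    rw [show (K-1).succ = K from h2] at h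
    exact h
  intro v
  induction v with
  | zero =>
    constructor
    · have h0 : (F K)^[K-1] 0 = 0 := Function.iterate_fixed ((hF K hK).1) _
      rw [h0]
      simpa using le_of_eq ((hF K hK).1)
    · intro h; exact absurd h (by omega)
  | succ v IHv =>
    obtain ⟨Dv, Cv⟩ := IHv
    have Cv1 : v + 1 ≤ F K ((v+1) + (F K)^[K-1] v) := by
      have harg : (v+1) + (F K)^[K-1] v = (v + (F K)^[K-1] v) + 1 := by omega
      rw [harg]
      have e1 := stmt17_eqn F hF K hK (v + (F K)^[K-1] v)
      have e2 := hiter (v + (F K)^[K-1] v)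
      have e3 : (F K)^[K-1] (F K (v + (F K)^[K-1] v)) ≤ (F K)^[K-1] v :=
        stmt17_mono F hF K hK (K-1) _ _ Dv
      omega
    refine ⟨?_, fun _ => by simpa using Cv1⟩
    rcases (show (F K)^[K-1] (v+1) = (F K)^[K-1] v ∨ (F K)^[K-1] (v+1) = (F K)^[K-1] v + 1 by
        have hm := (stmt17_pair F hF K hK v (K-1)).1
        have hl := (stmt17_pair F hF K hK v (K-1)).2
        omega) with h | h
    · rw [h]
      have harg : (v+1) + (F K)^[K-1] v = (v + (F K)^[K-1] v) + 1 := by omega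
      rw [harg]
      have hl := stmt17_lip1 F hF K hK (v + (F K)^[K-1] v)
      omega
    · rw [h]
      have harg : (v+1) + ((F K)^[K-1] v + 1) = ((v+1) + (F K)^[K-1] v) + 1 := by omega
      rw [harg]
      have e1 := stmt17_eqn F hF K hK ((v+1) + (F K)^[K-1] v)
      have e2 := hiter ((v+1) + (F K)^[K-1] v)
      have e3 : (F K)^[K-1] (v+1) ≤ (F K)^[K-1] (F K ((v+1) + (F K)^[K-1] v)) :=
        stmt17_mono F hF K hK (K-1) _ _ Cv1
      omega

lemma stmt17_inv_lower (K : ℕ) (hK : 1 ≤ K) (v n : ℕ) (hv : 1 ≤ v) (h : v ≤ F K n) :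
    v + (F K)^[K-1] (v-1) ≤ n := by
  by_contra hc
  push_neg at hc
  have hD := (stmt17_CD F hF K hK (v-1)).1
  have hmono : F K n ≤ F K ((v-1) + (F K)^[K-1] (v-1)) :=
    stmt17_mono1 F hF K hK _ _ (by omega)
  omega

lemma stmt17_two_le_iter (K : ℕ) (hK : 1 ≤ K) :
    ∀ j, j ≤ K → ∀ n, j + 2 ≤ n → 2 ≤ (F K)^[j] n := by
  intro j
  induction j with
  | zero => intro _ n hn; simpa using hn
  | succ j IHj =>
    intro hj n hn
    rw [Function.iterate_succ_apply]
    apply IHj (by omega)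
    have e1 := stmt17_eqn F hF K hK (j+2)
    have e2 : (F K)^[K] (j+2) ≤ 1 := stmt17_iter_le_one F hF K hK K (j+2) (by omega)
    have h3 : j + 2 ≤ F K (j+2+1) := by omega
    have h4 : F K (j+2+1) ≤ F K n := stmt17_mono1 F hF K hK _ _ (by omega)
    omega

lemma stmt17_main (k : ℕ) (hk : 1 ≤ k) :
    ∀ n, 2 ≤ n → ∀ j, j ≤ k → (F (k+1))^[j+1] n ≤ (F k)^[j] (n-1) := by
  have hk' : 1 ≤ k + 1 := by omega
  intro n
  induction n using Nat.strong_induction_on with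
  | _ n IH =>
    intro hn2
    have levelk : (F (k+1))^[k+1] n ≤ (F k)^[k] (n-1) := by
      obtain ⟨p, rfl⟩ : ∃ p, n = p+1 := ⟨n-1, by omega⟩
      simp only [Nat.add_sub_cancel]
      have hp1 : 1 ≤ p := by omega
      have e1 := stmt17_eqn F hF k hk p
      have e2 := stmt17_eqn F hF (k+1) hk' (p+1)
      have key : F k (p+1) + 1 ≤ F (k+1) (p+1+1) := by
        by_cases hm2 : 2 ≤ F k (p+1)
        · have hmp : F k (p+1) + 1 ≤ p + 1 := stmt17_le_pred F hF k hk (p+1) (by omega)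
          have hIH := IH (F k (p+1)) (by omega) (by omega) (k-1) (by omega)
          rw [show k-1+1 = k by omega] at hIH
          have hlow := stmt17_inv_lower F hF k hk (F k (p+1)) (p+1) (by omega) le_rfl
          have hC := (stmt17_CD F hF (k+1) hk' (F k (p+1) + 1)).2 (by omega)
          simp only [Nat.add_sub_cancel] at hC
          have hmono := stmt17_mono1 F hF (k+1) hk'
            (F k (p+1) + 1 + (F (k+1))^[k] (F k (p+1))) (p+1+1) (by omega)
          omega
        · have hm1 : F k (p+1) = 1 := by
            have := stmt17_one_le F hF k hk (p+1) (by omega); omega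
          have hC := (stmt17_CD F hF (k+1) hk' 2).2 (by omega)
          rw [show (2:ℕ)-1 = 1 from rfl] at hC
          rw [show k+1-1 = k from by omega] at hC
          have hone : (F (k+1))^[k] 1 = 1 :=
            Function.iterate_fixed (stmt17_F1 F hF (k+1) hk') k
          rw [hone] at hC
          have hmono := stmt17_mono1 F hF (k+1) hk' (2+1) (p+1+1) (by omega)
          omega
      omega
    have down : ∀ d, d ≤ k → (F (k+1))^[(k-d)+1] n ≤ (F k)^[k-d] (n-1) := by
      intro d
      induction d with
      | zero => intro _; simpa using levelk
      | succ d IHd =>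
        intro hd
        have hprev := IHd (by omega)
        rw [show k - d = (k-(d+1))+1 by omega] at hprev
        by_cases hj0 : k-(d+1) = 0
        · rw [hj0]
          simp only [zero_add, Function.iterate_one, Function.iterate_zero, id_eq]
          have hle := stmt17_le_pred F hF (k+1) hk' n hn2
          omega
        · set j := k - (d+1) with hjdef
          set y := (F k)^[j] (n-1) with hydef
          have hy1 : 1 ≤ y := by
            rw [hydef]; exact stmt17_iter_one_le F hF k hk j (n-1) (by omega)
          by_cases hy2 : 2 ≤ y
          · have hyn : y ≤ n - 1 := by
              rw [hydef]; exact stmt17_iter_le_self F hF k hk j (n-1)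
            have hIHy := IH y (by omega) hy2 k le_rfl
            obtain ⟨q, hq⟩ : ∃ q, y = q+1 := ⟨y-1, by omega⟩
            rw [hq] at hIHy
            simp only [Nat.add_sub_cancel] at hIHy
            have e1 := stmt17_eqn F hF k hk q
            have e2 := stmt17_eqn F hF (k+1) hk' (q+1)
            by_contra hcon
            push_neg at hcon
            have hstep : F (k+1) (q+1+1) ≤ F (k+1) ((F (k+1))^[j+1] n) :=
              stmt17_mono1 F hF (k+1) hk' _ _ (by omega)
            have hrw1 : (F (k+1))^[j+1+1] n = F (k+1) ((F (k+1))^[j+1] n) :=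
              Function.iterate_succ_apply' _ _ _
            have hrw2 : (F k)^[j+1] (n-1) = F k (q+1) := by
              rw [Function.iterate_succ_apply', ← hydef, hq]
            rw [hrw1, hrw2] at hprev
            omega
          · have hy1' : y = 1 := by omega
            have hsmall : n ≤ j + 2 := by
              by_contra hbig
              push_neg at hbig
              have h2 := stmt17_two_le_iter F hF k hk j (by omega) (n-1) (by omega)
              rw [← hydef] at h2
              omega
            have hle := stmt17_iter_le_one F hF (k+1) hk' (j+1) n (by omega)
            omega
    intro j hj
    have hfin := down (k-j) (by omega)
    rw [show k-(k-j) = j by omega] at hfin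
    exact hfin

end Stmt17Aux

/-- For all k ≥ 1, 0 ≤ j ≤ k and n ≥ 0, F_k^j(n) ≥ F_{k+1}^{j+1}(n). -/
theorem stmt17 (F : ℕ → ℕ → ℕ)
    (hF : ∀ k, 1 ≤ k → F k 0 = 0 ∧ ∀ n, 1 ≤ n → F k n = n - (F k)^[k] (n - 1))
    (k j : ℕ) (hk : 1 ≤ k) (hj : j ≤ k) (n : ℕ) :
    (F (k + 1))^[j + 1] n ≤ (F k)^[j] n := by
  have hk' : 1 ≤ k + 1 := by omega
  rcases n with _ | (_ | n)
  · have h1 : (F (k+1))^[j+1] 0 = 0 := Function.iterate_fixed ((hF (k+1) hk').1) _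
    have h2 : (F k)^[j] 0 = 0 := Function.iterate_fixed ((hF k hk).1) _
    omega
  · show (F (k+1))^[j+1] 1 ≤ (F k)^[j] 1
    have h1 : (F (k+1))^[j+1] 1 = 1 :=
      Function.iterate_fixed (stmt17_F1 F hF (k+1) hk') _
    have h2 : (F k)^[j] 1 = 1 := Function.iterate_fixed (stmt17_F1 F hF k hk) _
    omega
  · have hmain := stmt17_main F hF k hk (n+1+1) (by omega) j hj
    have h2 : (F k)^[j] (n+1+1-1) ≤ (F k)^[j] (n+1+1) :=
      stmt17_mono F hF k hk j _ _ (by omega)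
    exact hmain.trans h2
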